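/- Let G = (N, Σ, P) be a context-free grammar in Chomsky Normal Form and a ∈ N a nonterminal with L(G; a) nonempty. Then there exists a subset P' ⊆ P that is deterministic non-recursive and such that the unique string derived from a using P' has length equal to the minimum length of a string in L(G; a). -/

import Mathlib

/-- Derivation relation of a context-free grammar in Chomsky Normal Form:
`Pb a b c` means the binary rule `a → b c` is present, and `Pt a s` means the
terminal rule `a → s` is present. `CNFDerives Pb Pt a w` means the terminal
string `w ∈ Σ*` is derivable from the nonterminal `a`, i.e. `w ∈ L(G; a)`. -/
inductive CNFDerives {N σ : Type*} (Pb : N → N → N → Prop) (Pt : N → σ → Prop) :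
    N → List σ → Prop
  | term {a : N} {s : σ} : Pt a s → CNFDerives Pb Pt a [s]
  | bin {a b c : N} {w₁ w₂ : List σ} : Pb a b c → CNFDerives Pb Pt b w₁ →
      CNFDerives Pb Pt c w₂ → CNFDerives Pb Pt a (w₁ ++ w₂)

/-- One-step "occurs in a derived sentential form" relation on nonterminals:
`NTStep Pb a b` holds when some binary rule `a → b c` or `a → c b` is in `Pb`. -/
inductive NTStep {N : Type*} (Pb : N → N → N → Prop) : N → N → Prop
  | left {a b c : N} : Pb a b c → NTStep Pb a b
  | right {a b c : N} : Pb a b c → NTStep Pb a c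

/-- `a` is a head nonterminal of the rule set `(Pb, Pt)`. -/
def IsHead {N σ : Type*} (Pb : N → N → N → Prop) (Pt : N → σ → Prop) (a : N) : Prop :=
  (∃ b c, Pb a b c) ∨ (∃ s, Pt a s)

/-- The rule set `(Pb, Pt)` is deterministic non-recursive: no head nonterminal
is derivable from itself in one or more rewrite steps, every head nonterminal
has exactly one rule, and every head nonterminal derives some terminal string. -/
def DetNonRec {N σ : Type*} (Pb : N → N → N → Prop) (Pt : N → σ → Prop) : Prop :=
  (∀ a, IsHead Pb Pt a → ¬ Relation.TransGen (NTStep Pb) a a) ∧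
  (∀ a, IsHead Pb Pt a →
    (∀ b c b' c', Pb a b c → Pb a b' c' → b = b' ∧ c = c') ∧
    (∀ s s', Pt a s → Pt a s' → s = s') ∧
    ¬ ((∃ b c, Pb a b c) ∧ (∃ s, Pt a s))) ∧
  (∀ a, IsHead Pb Pt a → ∃ w, CNFDerives Pb Pt a w)

namespace Stmt3Aux

variable {N σ : Type*} (Pb : N → N → N → Prop) (Pt : N → σ → Prop)

def Productive (x : N) : Prop := ∃ w, CNFDerives Pb Pt x w

noncomputable def mlen (x : N) : ℕ :=
  sInf {n | ∃ w, CNFDerives Pb Pt x w ∧ w.length = n}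

lemma mlen_spec {x : N} (hx : Productive Pb Pt x) :
    ∃ w, CNFDerives Pb Pt x w ∧ w.length = mlen Pb Pt x := by
  have : mlen Pb Pt x ∈ {n | ∃ w, CNFDerives Pb Pt x w ∧ w.length = n} := by
    apply Nat.sInf_mem
    obtain ⟨w, hw⟩ := hx
    exact ⟨w.length, w, hw, rfl⟩
  obtain ⟨w, hw, hl⟩ := this
  exact ⟨w, hw, hl⟩

lemma mlen_le {x : N} {w : List σ} (hw : CNFDerives Pb Pt x w) :
    mlen Pb Pt x ≤ w.length := Nat.sInf_le ⟨w, hw, rfl⟩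

lemma length_pos {x : N} {w : List σ} (hw : CNFDerives Pb Pt x w) : 0 < w.length := by
  induction hw with
  | term => simp
  | bin _ _ _ ih1 ih2 => simpa using Or.inl ih1

lemma mlen_pos {x : N} (hx : Productive Pb Pt x) : 0 < mlen Pb Pt x := by
  obtain ⟨w, hw, hl⟩ := mlen_spec Pb Pt hx
  rw [← hl]; exact length_pos Pb Pt hw

def Good (x : N) : ((N × N) ⊕ σ) → Prop
  | .inl (b, c) => Pb x b c ∧ Productive Pb Pt b ∧ Productive Pb Pt c ∧
      mlen Pb Pt b + mlen Pb Pt c = mlen Pb Pt x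
  | .inr s => Pt x s ∧ mlen Pb Pt x = 1

lemma good_exists {x : N} (hx : Productive Pb Pt x) : ∃ r, Good Pb Pt x r := by
  obtain ⟨w, hw, hlen⟩ := mlen_spec Pb Pt hx
  cases hw with
  | term hs => exact ⟨.inr _, hs, by simpa using hlen.symm⟩
  | @bin _ b c w₁ w₂ hbc h1 h2 =>
    refine ⟨.inl (b, c), hbc, ⟨_, h1⟩, ⟨_, h2⟩, ?_⟩
    have hb := mlen_le Pb Pt h1
    have hc := mlen_le Pb Pt h2
    obtain ⟨wb, hwb, hlb⟩ := mlen_spec Pb Pt ⟨_, h1⟩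
    obtain ⟨wc, hwc, hlc⟩ := mlen_spec Pb Pt ⟨_, h2⟩
    have hcomb := mlen_le Pb Pt (CNFDerives.bin hbc hwb hwc)
    simp [List.length_append] at hcomb hlen
    omega

noncomputable def pick (x : N) : (N × N) ⊕ σ :=
  @Classical.epsilon _ ⟨Sum.inl (x, x)⟩ (Good Pb Pt x)

lemma pick_good {x : N} (hx : Productive Pb Pt x) : Good Pb Pt x (pick Pb Pt x) :=
  Classical.epsilon_spec (good_exists Pb Pt hx)

def Pb' (x b c : N) : Prop := Productive Pb Pt x ∧ pick Pb Pt x = .inl (b, c)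

def Pt' (x : N) (s : σ) : Prop := Productive Pb Pt x ∧ pick Pb Pt x = .inr s

lemma step_lt {x y : N} (hs : NTStep (Pb' Pb Pt) x y) : mlen Pb Pt y < mlen Pb Pt x := by
  have key : ∀ b c : N, Pb' Pb Pt x b c →
      mlen Pb Pt b < mlen Pb Pt x ∧ mlen Pb Pt c < mlen Pb Pt x := by
    intro b c ⟨hx, hp⟩
    have hg := pick_good Pb Pt hx
    rw [hp] at hg
    obtain ⟨_, hb, hc, hsum⟩ := hg
    have := mlen_pos Pb Pt hb
    have := mlen_pos Pb Pt hc
    omega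
  cases hs with
  | left hp => exact (key _ _ hp).1
  | right hp => exact (key _ _ hp).2

lemma derive_min : ∀ n x, Productive Pb Pt x → mlen Pb Pt x ≤ n →
    ∃ w, CNFDerives (Pb' Pb Pt) (Pt' Pb Pt) x w ∧ w.length = mlen Pb Pt x := by
  intro n
  induction n with
  | zero => intro x hx hle; exact absurd hle (by have := mlen_pos Pb Pt hx; omega)
  | succ n ih =>
    intro x hx hle
    have hg := pick_good Pb Pt hx
    rcases hp : pick Pb Pt x with ⟨b, c⟩ | s
    · rw [hp] at hg
      obtain ⟨hbc, hb, hc, hsum⟩ := hg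
      have hb1 := mlen_pos Pb Pt hb
      have hc1 := mlen_pos Pb Pt hc
      obtain ⟨w₁, h1, l1⟩ := ih b hb (by omega)
      obtain ⟨w₂, h2, l2⟩ := ih c hc (by omega)
      exact ⟨w₁ ++ w₂, CNFDerives.bin ⟨hx, hp⟩ h1 h2, by simp [l1, l2, hsum]⟩
    · rw [hp] at hg
      exact ⟨[s], CNFDerives.term ⟨hx, hp⟩, by simp [hg.2]⟩

lemma head_productive {x : N} (hx : IsHead (Pb' Pb Pt) (Pt' Pb Pt) x) :
    Productive Pb Pt x := by
  rcases hx with ⟨b, c, hx, _⟩ | ⟨s, hx, _⟩ <;> exact hx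

end Stmt3Aux

/-- For a CNF grammar `G = (N, Σ, P)` and a nonterminal `a` with `L(G; a) ≠ ∅`,
there is a deterministic non-recursive subset `P' ⊆ P` with `a` a head of `P'`
such that the unique string derived from `a` via `P'` has length equal to the
minimum length of a string in `L(G; a)`. -/
theorem stmt3 {N σ : Type*} (Pb : N → N → N → Prop) (Pt : N → σ → Prop) (a : N)
    (h : ∃ w, CNFDerives Pb Pt a w) :
    ∃ (Pb' : N → N → N → Prop) (Pt' : N → σ → Prop),
      (∀ x y z, Pb' x y z → Pb x y z) ∧ (∀ x s, Pt' x s → Pt x s) ∧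
      DetNonRec Pb' Pt' ∧ IsHead Pb' Pt' a ∧
      ∃ w, CNFDerives Pb' Pt' a w ∧
        w.length = sInf {n | ∃ w', CNFDerives Pb Pt a w' ∧ w'.length = n} := by
  open Stmt3Aux in
  refine ⟨Pb' Pb Pt, Pt' Pb Pt, ?_, ?_, ⟨?_, ?_, ?_⟩, ?_, ?_⟩
  · intro x y z ⟨hx, hp⟩
    have hg := pick_good Pb Pt hx
    rw [hp] at hg
    exact hg.1
  · intro x s ⟨hx, hp⟩
    have hg := pick_good Pb Pt hx
    rw [hp] at hg
    exact hg.1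
  · intro x _ hT
    have : ∀ y z : N, Relation.TransGen (NTStep (Pb' Pb Pt)) y z →
        mlen Pb Pt z < mlen Pb Pt y := by
      intro y z hyz
      induction hyz with
      | single hs => exact step_lt Pb Pt hs
      | tail _ hs ih => exact lt_trans (step_lt Pb Pt hs) ih
    exact absurd (this x x hT) (lt_irrefl _)
  · intro x _
    refine ⟨?_, ?_, ?_⟩
    · rintro b c b' c' ⟨_, hp⟩ ⟨_, hp'⟩
      rw [hp] at hp'
      injection hp' with hp'
      exact ⟨congrArg Prod.fst hp', congrArg Prod.snd hp'⟩
    · rintro s s' ⟨_, hp⟩ ⟨_, hp'⟩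
      rw [hp] at hp'
      injection hp'
    · rintro ⟨⟨b, c, _, hp⟩, ⟨s, _, hp'⟩⟩
      rw [hp] at hp'
      exact Sum.inl_ne_inr hp'
  · intro x hx
    obtain ⟨w, hw, _⟩ := derive_min Pb Pt (mlen Pb Pt x) x (head_productive Pb Pt hx) le_rfl
    exact ⟨w, hw⟩
  · have hg := pick_good Pb Pt h
    rcases hp : pick Pb Pt a with ⟨b, c⟩ | s
    · exact Or.inl ⟨b, c, h, hp⟩
    · exact Or.inr ⟨s, h, hp⟩
  · obtain ⟨w, hw, hl⟩ := derive_min Pb Pt (mlen Pb Pt a) a h le_rfl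
    exact ⟨w, hw, hl⟩
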